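/- arXiv:2605.18065 — 3 statements merged into one kernel-verified Lean document; each statement's English description precedes it below -/
import Mathlib

section
/- For every real number z with 0 ≤ z ≤ 1/4, the series ∑_{n=0}^{∞} Cat(n)·z^{n+1} converges, and its sum equals (1 − √(1 − 4z))/2, where Cat(n) denotes the n-th Catalan number. -/
/-- For `0 ≤ z ≤ 1/4`, the generating series of the Catalan numbers
`∑_{n=0}^∞ catalan n * z^(n+1)` converges with sum `(1 - √(1 - 4z))/2`. -/
theorem stmt_1 (z : ℝ) (h0 : 0 ≤ z) (h1 : z ≤ 1 / 4) :
    HasSum (fun n : ℕ => (catalan n : ℝ) * z ^ (n + 1))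
      ((1 - Real.sqrt (1 - 4 * z)) / 2) := by
  set f : ℕ → ℝ := fun n => (catalan n : ℝ) * z ^ (n + 1) with hf
  set s : ℝ := Real.sqrt (1 - 4 * z) with hsdef
  have h4 : (0:ℝ) ≤ 1 - 4 * z := by linarith
  have hs2 : s ^ 2 = 1 - 4 * z := Real.sq_sqrt h4
  have hs0 : 0 ≤ s := Real.sqrt_nonneg _
  set L : ℝ := (1 - s) / 2 with hLdef
  have hL : z + L ^ 2 = L := by rw [hLdef]; nlinarith [hs2]
  have hfnn : ∀ n, 0 ≤ f n := fun n => by simp only [hf]; positivity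
  have hf0 : f 0 = z := by simp [hf]
  -- convolution identity
  have hconv : ∀ m : ℕ, f (m + 1) = ∑ p ∈ Finset.HasAntidiagonal.antidiagonal m, f p.1 * f p.2 := by
    intro m
    simp only [hf, catalan_succ', Nat.cast_sum, Nat.cast_mul, Finset.sum_mul]
    refine Finset.sum_congr rfl fun p hp => ?_
    have hpm : p.1 + p.2 = m := Finset.HasAntidiagonal.mem_antidiagonal.mp hp
    rw [← hpm]; ring
  -- partial sums bounded by L
  have hbound : ∀ N, ∑ i ∈ Finset.range N, f i ≤ L := by
    intro N
    induction N with
    | zero => simp; nlinarith [hL, sq_nonneg L]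
    | succ N ih =>
      rw [Finset.sum_range_succ']
      have key : ∑ m ∈ Finset.range N, f (m + 1)
          ≤ (∑ i ∈ Finset.range N, f i) * (∑ i ∈ Finset.range N, f i) := by
        simp_rw [hconv]
        rw [← Finset.sum_biUnion (by
          intro a _ b _ hab
          exact Finset.disjoint_left.mpr fun p hpa hpb => hab
            (by rw [← Finset.HasAntidiagonal.mem_antidiagonal.mp hpa, Finset.HasAntidiagonal.mem_antidiagonal.mp hpb])),
          Finset.sum_mul_sum, ← Finset.sum_product']
        refine Finset.sum_le_sum_of_subset_of_nonneg ?_ fun p _ _ =>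
          mul_nonneg (hfnn _) (hfnn _)
        intro p hp
        obtain ⟨m, hm, hpm⟩ := Finset.mem_biUnion.mp hp
        have hmN := Finset.mem_range.mp hm
        have h12 : p.1 + p.2 = m := Finset.HasAntidiagonal.mem_antidiagonal.mp hpm
        exact Finset.mem_product.mpr ⟨Finset.mem_range.mpr (by omega),
          Finset.mem_range.mpr (by omega)⟩
      have hSnn : 0 ≤ ∑ i ∈ Finset.range N, f i := Finset.sum_nonneg fun i _ => hfnn i
      have : (∑ i ∈ Finset.range N, f i) * (∑ i ∈ Finset.range N, f i) ≤ L ^ 2 := by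
        nlinarith [ih]
      rw [hf0]
      linarith [key]
  have hsum : Summable f := summable_of_sum_range_le hfnn hbound
  set c : ℝ := ∑' n, f n with hc
  have hcL : c ≤ L := Summable.tsum_le_of_sum_range_le hsum hbound
  have hc0 : 0 ≤ c := tsum_nonneg hfnn
  -- Cauchy product: c * c = ∑' n, f (n+1) = c - z
  have hnorm : Summable fun n => ‖f n‖ := by
    simpa [Real.norm_eq_abs, abs_of_nonneg (hfnn _)] using hsum
  have hcauchy : c * c = ∑' n, ∑ k ∈ Finset.range (n + 1), f k * f (n - k) :=
    tsum_mul_tsum_eq_tsum_sum_range_of_summable_norm hnorm hnorm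
  have hinner : ∀ n : ℕ, ∑ k ∈ Finset.range (n + 1), f k * f (n - k) = f (n + 1) := by
    intro n
    rw [hconv n, ← Finset.Nat.sum_antidiagonal_eq_sum_range_succ fun k l => f k * f l]
  have hshift : c = z + c * c := by
    rw [hcauchy]
    simp_rw [hinner]
    rw [hc, Summable.tsum_eq_zero_add hsum, hf0]
  -- solve the quadratic
  have hquad : (c - L) * (c - (1 + s) / 2) = 0 := by
    have : c * c - c + z = 0 := by linarith [hshift]
    nlinarith [hs2, this]
  have hcL' : c = L := by
    rcases mul_eq_zero.mp hquad with h | h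
    · linarith
    · have : c = (1 + s) / 2 := by linarith
      have : s = 0 := by rw [hLdef] at hcL; linarith
      rw [hLdef, this]; linarith
  have := hsum.hasSum
  rwa [← hc, hcL'] at this
end

section
/- Let C > 0 be a real number and let (a_k)_{k≥1} be a sequence of nonnegative real numbers such that a_k ≤ C·∑_{i=1}^{k-1} a_i·a_{k-i} for every k ≥ 2. If a₁ ≤ 2/(9C), then the series ∑_{k=2}^{∞} a_k converges and ∑_{k=2}^{∞} a_k ≤ (1/2)·a₁. -/
open Finset

lemma conv_le_aux (a : ℕ → ℝ) (ha : ∀ k, 1 ≤ k → 0 ≤ a k) (n : ℕ) :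
    ∑ k ∈ Ico 2 (n+1), ∑ i ∈ Ico 1 k, a i * a (k - i)
      ≤ (∑ i ∈ Ico 1 n, a i)^2 := by
  have hR : (∑ i ∈ Ico 1 n, a i)^2
      = ∑ p ∈ Ico 1 n ×ˢ Ico 1 n, a p.1 * a p.2 := by
    rw [sq, Finset.sum_mul_sum, Finset.sum_product]
  rw [hR, Finset.sum_sigma']
  have key : ∑ p ∈ (Ico 2 (n+1)).sigma (fun k => Ico 1 k), a p.2 * a (p.1 - p.2)
      = ∑ p ∈ (Ico 1 n ×ˢ Ico 1 n).filter (fun p => p.1 + p.2 ≤ n),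
          a p.1 * a p.2 := by
    apply Finset.sum_nbij' (i := fun p => (p.2, p.1 - p.2))
      (j := fun p => ⟨p.1 + p.2, p.1⟩)
    case hi =>
      rintro ⟨k, i⟩ hp
      simp only [Finset.mem_sigma, Finset.mem_Ico] at hp
      simp only [Finset.mem_filter, Finset.mem_product, Finset.mem_Ico]
      omega
    case hj =>
      rintro ⟨i, j⟩ hp
      simp only [Finset.mem_filter, Finset.mem_product, Finset.mem_Ico] at hp
      simp only [Finset.mem_sigma, Finset.mem_Ico]
      omega
    case left_neg =>
      rintro ⟨k, i⟩ hp
      simp only [Finset.mem_sigma, Finset.mem_Ico] at hp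
      simp only [Sigma.mk.inj_iff]
      constructor
      · omega
      · rfl
    case right_neg =>
      rintro ⟨i, j⟩ hp
      simp only [Finset.mem_filter, Finset.mem_product, Finset.mem_Ico] at hp
      show ((i : ℕ), i + j - i) = (i, j)
      simp
    case h => intros; rfl
  rw [key]
  apply Finset.sum_le_sum_of_subset_of_nonneg (Finset.filter_subset _ _)
  rintro ⟨i, j⟩ hp _
  simp only [Finset.mem_product, Finset.mem_Ico] at hp
  exact mul_nonneg (ha i hp.1.1) (ha j hp.2.1)

/-- Quantitative tail estimate: if `(a k)` is nonnegative with
`a k ≤ C * ∑_{i=1}^{k-1} a i * a (k-i)` for `k ≥ 2` and `a 1 ≤ 2/(9C)`, then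
`∑_{k=2}^∞ a k` converges and is at most `(1/2) * a 1`. -/
theorem stmt_4 (C : ℝ) (hC : 0 < C) (a : ℕ → ℝ) (ha0 : ∀ k, 1 ≤ k → 0 ≤ a k)
    (harec : ∀ k, 2 ≤ k → a k ≤ C * ∑ i ∈ Finset.Ico 1 k, a i * a (k - i))
    (ha1 : a 1 ≤ 2 / (9 * C)) :
    Summable (fun k : ℕ => a (k + 2)) ∧
      ∑' k : ℕ, a (k + 2) ≤ (1 / 2) * a 1 := by
  have ha1n : 0 ≤ a 1 := ha0 1 le_rfl
  have hP : ∀ n, ∑ k ∈ Ico 2 (n+1), a k ≤ (1/2) * a 1 := by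
    intro n
    induction n with
    | zero => simp; positivity
    | succ n ih =>
      have h1 : ∑ i ∈ Ico 1 (n+1), a i ≤ (3/2) * a 1 := by
        rcases Nat.eq_zero_or_pos n with rfl | hn
        · simp; positivity
        · rw [Finset.sum_eq_sum_Ico_succ_bot (by omega : 1 < n + 1)]
          linarith [ih]
      calc ∑ k ∈ Ico 2 (n+2), a k
          ≤ ∑ k ∈ Ico 2 (n+2), C * ∑ i ∈ Ico 1 k, a i * a (k - i) := by
            apply Finset.sum_le_sum
            intro k hk
            exact harec k (Finset.mem_Ico.mp hk).1
        _ = C * ∑ k ∈ Ico 2 (n+2), ∑ i ∈ Ico 1 k, a i * a (k - i) := by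
            rw [Finset.mul_sum]
        _ ≤ C * (∑ i ∈ Ico 1 (n+1), a i)^2 :=
            mul_le_mul_of_nonneg_left (conv_le_aux a ha0 (n+1)) hC.le
        _ ≤ C * ((3/2) * a 1)^2 := by
            apply mul_le_mul_of_nonneg_left _ hC.le
            apply pow_le_pow_left₀ _ h1
            exact Finset.sum_nonneg fun i hi => ha0 i (Finset.mem_Ico.mp hi).1
        _ = (9/4) * C * (a 1 * a 1) := by ring
        _ ≤ (9/4) * C * ((2/(9*C)) * a 1) := by
            apply mul_le_mul_of_nonneg_left _ (by positivity)
            exact mul_le_mul_of_nonneg_right ha1 ha1n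
        _ = (1/2) * a 1 := by field_simp; ring
  have hrange : ∀ n, ∑ i ∈ Finset.range n, a (i + 2) ≤ (1/2) * a 1 := by
    intro n
    have heq : ∑ i ∈ Finset.range n, a (i + 2) = ∑ k ∈ Ico 2 (n+2), a k := by
      rw [Finset.sum_Ico_eq_sum_range]
      simp only [Nat.add_sub_cancel]
      exact Finset.sum_congr rfl fun i _ => by rw [Nat.add_comm]
    rw [heq]
    exact hP (n+1)
  have hnn : ∀ k : ℕ, 0 ≤ a (k + 2) := fun k => ha0 (k+2) (by omega)
  exact ⟨summable_of_sum_range_le hnn hrange,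
    Real.tsum_le_of_sum_range_le hnn hrange⟩
end

section
/- Let E be a complex Banach space, C > 0 a real number, and (v_k)_{k≥1} a sequence in E such that ‖v_k‖ ≤ C·∑_{i=1}^{k-1} ‖v_i‖·‖v_{k-i}‖ for every k ≥ 2. If ‖v₁‖ ≤ 2/(9C), then the series ∑_{k=1}^{∞} v_k converges absolutely, and its sum v satisfies (1/2)·‖v₁‖ ≤ ‖v‖ ≤ (3/2)·‖v₁‖. -/
lemma conv_le (a : ℕ → ℝ) (ha : ∀ i, 0 ≤ a i) (N : ℕ) :
    ∑ k ∈ Finset.range N, ∑ i ∈ Finset.Ico 1 (k + 2), a i * a (k + 2 - i) ≤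
      (∑ j ∈ Finset.range N, a (j + 1)) ^ 2 := by
  have hswap :
      ∑ k ∈ Finset.range N, ∑ i ∈ Finset.Ico 1 (k + 2), a i * a (k + 2 - i) =
        ∑ i ∈ Finset.Ico 1 (N + 1), ∑ k ∈ Finset.Ico (i - 1) N, a i * a (k + 2 - i) := by
    apply Finset.sum_comm'
    intro k i
    simp only [Finset.mem_range, Finset.mem_Ico]
    omega
  rw [hswap]
  have hS : ∑ i ∈ Finset.Ico 1 (N + 1), a i = ∑ j ∈ Finset.range N, a (j + 1) := by
    rw [Finset.sum_Ico_eq_sum_range]; simp [add_comm]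
  calc ∑ i ∈ Finset.Ico 1 (N + 1), ∑ k ∈ Finset.Ico (i - 1) N, a i * a (k + 2 - i)
      ≤ ∑ i ∈ Finset.Ico 1 (N + 1), a i * ∑ j ∈ Finset.range N, a (j + 1) := by
        apply Finset.sum_le_sum
        intro i hi
        simp only [Finset.mem_Ico] at hi
        rw [← Finset.mul_sum]
        apply mul_le_mul_of_nonneg_left _ (ha i)
        have : ∑ k ∈ Finset.Ico (i - 1) N, a (k + 2 - i) =
            ∑ j ∈ Finset.range (N - (i - 1)), a (j + 1) := by
          rw [Finset.sum_Ico_eq_sum_range]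
          apply Finset.sum_congr rfl
          intro j _
          congr 1
          omega
        rw [this]
        apply Finset.sum_le_sum_of_subset_of_nonneg
        · exact Finset.range_subset_range.2 (by omega)
        · intro j _ _; exact ha _
    _ = (∑ j ∈ Finset.range N, a (j + 1)) ^ 2 := by
        rw [← Finset.sum_mul, hS, sq]

/-- Banach-space comparison of a Kuranishi-type series with its linear term: if
`‖v k‖ ≤ C * ∑_{i=1}^{k-1} ‖v i‖ * ‖v (k-i)‖` for `k ≥ 2` and `‖v 1‖ ≤ 2/(9C)`,
then `∑_{k=1}^∞ v k` converges absolutely and its sum `s` satisfies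
`(1/2)‖v 1‖ ≤ ‖s‖ ≤ (3/2)‖v 1‖`. -/
theorem stmt_5 {E : Type*} [NormedAddCommGroup E] [NormedSpace ℂ E]
    [CompleteSpace E] (C : ℝ) (hC : 0 < C) (v : ℕ → E)
    (hrec : ∀ k, 2 ≤ k →
      ‖v k‖ ≤ C * ∑ i ∈ Finset.Ico 1 k, ‖v i‖ * ‖v (k - i)‖)
    (h1 : ‖v 1‖ ≤ 2 / (9 * C)) :
    Summable (fun k : ℕ => ‖v (k + 1)‖) ∧
      ∃ s : E, HasSum (fun k : ℕ => v (k + 1)) s ∧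
        (1 / 2) * ‖v 1‖ ≤ ‖s‖ ∧ ‖s‖ ≤ (3 / 2) * ‖v 1‖ := by
  set a : ℕ → ℝ := fun k => ‖v k‖ with ha_def
  have ha : ∀ i, 0 ≤ a i := fun i => norm_nonneg _
  have h1' : C * a 1 ≤ 2 / 9 := by
    rw [div_mul_eq_div_div] at h1
    calc C * a 1 ≤ C * (2 / 9 / C) := by
          apply mul_le_mul_of_nonneg_left h1 hC.le
      _ = 2 / 9 := by field_simp
  -- key partial sum bound
  have key : ∀ N, ∑ k ∈ Finset.range N, a (k + 1) ≤ 3 / 2 * a 1 := by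
    intro N
    induction N with
    | zero => simp; positivity
    | succ N ih =>
      rw [Finset.sum_range_succ']
      have hterm : ∀ k ∈ Finset.range N, a (k + 1 + 1) ≤
          C * ∑ i ∈ Finset.Ico 1 (k + 2), a i * a (k + 2 - i) := by
        intro k _
        exact hrec (k + 2) (by omega)
      have h2 : ∑ k ∈ Finset.range N, a (k + 1 + 1) ≤
          C * (∑ j ∈ Finset.range N, a (j + 1)) ^ 2 := by
        calc ∑ k ∈ Finset.range N, a (k + 1 + 1)
            ≤ ∑ k ∈ Finset.range N, C * ∑ i ∈ Finset.Ico 1 (k + 2), a i * a (k + 2 - i) :=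
              Finset.sum_le_sum hterm
          _ = C * ∑ k ∈ Finset.range N, ∑ i ∈ Finset.Ico 1 (k + 2), a i * a (k + 2 - i) := by
              rw [Finset.mul_sum]
          _ ≤ C * (∑ j ∈ Finset.range N, a (j + 1)) ^ 2 :=
              mul_le_mul_of_nonneg_left (conv_le a ha N) hC.le
      have hSnn : 0 ≤ ∑ j ∈ Finset.range N, a (j + 1) :=
        Finset.sum_nonneg fun j _ => ha _
      have hsq : (∑ j ∈ Finset.range N, a (j + 1)) ^ 2 ≤ (3 / 2 * a 1) ^ 2 :=
        pow_le_pow_left₀ hSnn ih 2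
      have h3 := mul_le_mul_of_nonneg_left hsq hC.le
      have h4 := mul_le_mul_of_nonneg_right h1' (ha 1)
      have h5 : a (0 + 1) = a 1 := rfl
      nlinarith [ha 1]
  have hsummable : Summable (fun k : ℕ => ‖v (k + 1)‖) :=
    summable_of_sum_range_le (fun n => ha _) key
  refine ⟨hsummable, ?_⟩
  have hvs : Summable (fun k : ℕ => v (k + 1)) := hsummable.of_norm
  obtain ⟨s, hs⟩ := hvs
  have htail_bound : ∀ N, ∑ k ∈ Finset.range N, a (k + 2) ≤ 1 / 2 * a 1 := by
    intro N
    have := key (N + 1)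
    rw [Finset.sum_range_succ'] at this
    have h0 : 0 ≤ a 1 := ha 1
    have heq : ∀ k, a (k + 1 + 1) = a (k + 2) := fun k => rfl
    simp only [heq] at this
    linarith
  have htail_sum : HasSum (fun n : ℕ => v (n + 1 + 1)) (s - ∑ i ∈ Finset.range 1, v (i + 1)) :=
    (hasSum_nat_add_iff' 1).2 hs
  simp only [Finset.range_one, Finset.sum_singleton, zero_add] at htail_sum
  have htail_summable : Summable (fun n : ℕ => ‖v (n + 2)‖) := by
    have := (summable_nat_add_iff (f := fun k : ℕ => ‖v (k + 1)‖) 1).2 hsummable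
    simpa using this
  have htail_norm : ‖s - v 1‖ ≤ 1 / 2 * a 1 := by
    have h1' : s - v 1 = ∑' n : ℕ, v (n + 2) := by
      have : (fun n : ℕ => v (n + 1 + 1)) = fun n : ℕ => v (n + 2) := rfl
      rw [this] at htail_sum
      exact htail_sum.tsum_eq.symm
    rw [h1']
    calc ‖∑' n : ℕ, v (n + 2)‖ ≤ ∑' n : ℕ, ‖v (n + 2)‖ := norm_tsum_le_tsum_norm htail_summable
      _ ≤ 1 / 2 * a 1 := Summable.tsum_le_of_sum_range_le htail_summable htail_bound
  have hupper : ‖s‖ ≤ 3 / 2 * a 1 := by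
    have h1' : s = ∑' n : ℕ, v (n + 1) := hs.tsum_eq.symm
    rw [h1']
    calc ‖∑' n : ℕ, v (n + 1)‖ ≤ ∑' n : ℕ, ‖v (n + 1)‖ := norm_tsum_le_tsum_norm hsummable
      _ ≤ 3 / 2 * a 1 := Summable.tsum_le_of_sum_range_le hsummable key
  refine ⟨s, hs, ?_, ?_⟩
  · have heq : a 1 = ‖s - (s - v 1)‖ := by simp [ha_def]
    have h2 : ‖s - (s - v 1)‖ ≤ ‖s‖ + ‖s - v 1‖ := norm_sub_le _ _
    rw [← heq] at h2
    have : (1 : ℝ) / 2 * ‖v 1‖ = 1 / 2 * a 1 := rfl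
    rw [this]
    linarith
  · have : (3 : ℝ) / 2 * ‖v 1‖ = 3 / 2 * a 1 := rfl
    rw [this]
    linarith
end
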